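/- Let (V, I) be an interval system. If A ∈ I admits a greatest proper decomposition {B_j | j ∈ J} (|J| ≥ 2), then every block B_j is a strong set of (V, I). -/
import Mathlib


variable {V : Type*}

/-- `Q` is a closure system on `V`: it contains `V` and is closed under
intersections of nonempty subfamilies. -/
def IsClosureSystem (Q : Set (Set V)) : Prop :=
  Set.univ ∈ Q ∧ ∀ F ⊆ Q, F.Nonempty → ⋂₀ F ∈ Q

/-- Algebraic: the union of any nonempty chain of closed sets is closed. -/
def IsAlgebraicSystem (Q : Set (Set V)) : Prop :=
  ∀ C ⊆ Q, C.Nonempty → IsChain (· ⊆ ·) C → ⋃₀ C ∈ Q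

/-- Condition (I₀): the empty set and all singletons are closed. -/
def CondI0 (Q : Set (Set V)) : Prop := ∅ ∈ Q ∧ ∀ x : V, {x} ∈ Q

/-- Condition (I₁): the union of two intersecting members is a member. -/
def CondI1 (Q : Set (Set V)) : Prop :=
  ∀ A ∈ Q, ∀ B ∈ Q, (A ∩ B).Nonempty → A ∪ B ∈ Q

/-- Condition (I₂): differences of properly overlapping members are members. -/
def CondI2 (Q : Set (Set V)) : Prop :=
  ∀ A ∈ Q, ∀ B ∈ Q, (A ∩ B).Nonempty → ¬ A ⊆ B → ¬ B ⊆ A → A \ B ∈ Q ∧ B \ A ∈ Q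

/-- An interval system: an algebraic closure system satisfying (I₀), (I₁), (I₂). -/
def IsIntervalSystem (Q : Set (Set V)) : Prop :=
  IsClosureSystem Q ∧ IsAlgebraicSystem Q ∧ CondI0 Q ∧ CondI1 Q ∧ CondI2 Q

/-- `A` is a strong set of the closure system `Q`. -/
def IsStrong (Q : Set (Set V)) (A : Set V) : Prop :=
  A ∈ Q ∧ ∀ B ∈ Q, (A ∩ B).Nonempty → A ⊆ B ∨ B ⊆ A

/-- A decomposition: a partition of `V` (coded as a setoid) all of whose
blocks belong to `Q`.  The refinement order on partitions corresponds to the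
order on `Setoid V` (finer below). -/
def IsDecomp (Q : Set (Set V)) (π : Setoid V) : Prop :=
  ∀ x : V, {y | π.r x y} ∈ Q

/-- The lattice `D(V,Q)` of decompositions, as a subtype of `Setoid V`
with the induced (refinement) partial order. -/
abbrev Decomp (Q : Set (Set V)) := {π : Setoid V // IsDecomp Q π}

/-- `π_A`: the partition with block `A` and all other blocks singletons. -/
def piA (A : Set V) : Setoid V :=
  ⟨fun a b => a = b ∨ (a ∈ A ∧ b ∈ A), by
    constructor
    · intro a; exact Or.inl rfl
    · intro a b h; aesop
    · intro a b c h1 h2; aesop⟩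

/-- A decomposition of `A` in the restricted closure system `(A, Q_A)`,
`Q_A = {C ∩ A | C ∈ Q}`: a partition of `A` all of whose blocks are of the
form `C ∩ A` with `C ∈ Q`. -/
def IsRestDecomp (Q : Set (Set V)) (A : Set V) (μ : Setoid ↥A) : Prop :=
  ∀ x : ↥A, ∃ C ∈ Q, Subtype.val '' {y | μ.r x y} = C ∩ A

/-- `μ` is a greatest proper decomposition of `A` in `(A, Q_A)`: it is proper
(different from `{A}`, i.e. `μ ≠ ⊤`) and every proper decomposition of `A`
refines it. -/
def IsGreatestProperDecomp (Q : Set (Set V)) (A : Set V) (μ : Setoid ↥A) : Prop :=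
  IsRestDecomp Q A μ ∧ μ ≠ ⊤ ∧
    ∀ ν : Setoid ↥A, IsRestDecomp Q A ν → ν ≠ ⊤ → ν ≤ μ

/-- `π` is completely join-irreducible in the lattice `D(V,Q)`: it is not the
least decomposition `Δ` and whenever it is the join (least upper bound within
`D(V,Q)`) of a family of decompositions, it is one of them. -/
def IsCJI (Q : Set (Set V)) (π : Decomp Q) : Prop :=
  π.1 ≠ ⊥ ∧ ∀ S : Set (Decomp Q), IsLUB S π → π ∈ S

/-- Partition of `↥A` into the trace of `C` and its complement. -/
def twoBlock (A C : Set V) : Setoid ↥A :=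
  ⟨fun a b => ((a : V) ∈ C ↔ (b : V) ∈ C),
    ⟨fun _ => Iff.rfl, fun h => h.symm, fun h1 h2 => h1.trans h2⟩⟩

/-- Partition of `↥A` with one block the trace of `D` and singletons elsewhere. -/
def mergeBlock (A D : Set V) : Setoid ↥A :=
  ⟨fun a b => a = b ∨ ((a : V) ∈ D ∧ (b : V) ∈ D), by
    refine ⟨fun _ => Or.inl rfl, ?_, ?_⟩
    · rintro a b (rfl | ⟨h1, h2⟩); exacts [Or.inl rfl, Or.inr ⟨h2, h1⟩]
    · rintro a b c (rfl | ⟨h1, h2⟩) (rfl | ⟨h3, h4⟩)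
      exacts [Or.inl rfl, Or.inr ⟨h3, h4⟩, Or.inr ⟨h1, h2⟩, Or.inr ⟨h1, h4⟩]⟩

lemma twoBlock_image (A C : Set V) (z : ↥A) (hz : (z : V) ∈ C) :
    Subtype.val '' {y | (twoBlock A C).r z y} = C ∩ A := by
  ext v
  constructor
  · rintro ⟨y, hy, rfl⟩; exact ⟨hy.1 hz, y.2⟩
  · rintro ⟨h1, h2⟩; exact ⟨⟨v, h2⟩, iff_of_true hz h1, rfl⟩

lemma twoBlock_image' (A C : Set V) (z : ↥A) (hz : (z : V) ∉ C) :
    Subtype.val '' {y | (twoBlock A C).r z y} = A \ C := by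
  ext v
  constructor
  · rintro ⟨y, hy, rfl⟩; exact ⟨y.2, fun h => hz (hy.2 h)⟩
  · rintro ⟨h1, h2⟩; exact ⟨⟨v, h1⟩, iff_of_false hz h2, rfl⟩

lemma mergeBlock_image (A D : Set V) (z : ↥A) (hz : (z : V) ∈ D) (hDA : D ⊆ A) :
    Subtype.val '' {y | (mergeBlock A D).r z y} = D := by
  ext v
  constructor
  · rintro ⟨y, hy, rfl⟩
    rcases hy with rfl | ⟨_, h⟩
    · exact hz
    · exact h
  · intro hv; exact ⟨⟨v, hDA hv⟩, Or.inr ⟨hz, hv⟩, rfl⟩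

lemma mergeBlock_image' (A D : Set V) (z : ↥A) (hz : (z : V) ∉ D) :
    Subtype.val '' {y | (mergeBlock A D).r z y} = {(z : V)} := by
  ext v
  constructor
  · rintro ⟨y, hy, rfl⟩
    rcases hy with rfl | ⟨h, _⟩
    · rfl
    · exact absurd h hz
  · rintro rfl; exact ⟨z, Or.inl rfl, rfl⟩

/-- In an interval system, if `A ∈ I` admits a greatest proper decomposition
(which has at least two blocks), then every one of its blocks is a strong set
of `(V, I)`. -/
theorem stmt11 (I : Set (Set V)) (hI : IsIntervalSystem I)
    (A : Set V) (hA : A ∈ I)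
    (μ : Setoid ↥A) (hμ : IsGreatestProperDecomp I A μ)
    (h2 : ∃ B₁ ∈ μ.classes, ∃ B₂ ∈ μ.classes, B₁ ≠ B₂) :
    ∀ x : ↥A, IsStrong I (Subtype.val '' {y | μ.r x y}) := by
  classical
  obtain ⟨⟨-, hsInter⟩, -, ⟨-, hsingle⟩, hI1, hI2⟩ := hI
  have hbin : ∀ X ∈ I, ∀ Y ∈ I, X ∩ Y ∈ I := by
    intro X hX Y hY
    have h := hsInter {X, Y} (by rintro s (rfl | rfl) <;> assumption) ⟨X, by simp⟩
    simpa [Set.sInter_pair] using h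
  intro x
  set B := Subtype.val '' {y | μ.r x y} with hBdef
  have hBI : B ∈ I := by
    obtain ⟨C₀, hC₀, hB₀⟩ := hμ.1 x
    rw [hBdef, hB₀]
    exact hbin C₀ hC₀ A hA
  have hBA : B ⊆ A := by rintro v ⟨y, -, rfl⟩; exact y.2
  have memB : ∀ y : ↥A, (y : V) ∈ B ↔ μ.r x y := by
    intro y
    constructor
    · rintro ⟨z, hz, hzy⟩
      exact (Subtype.ext hzy : z = y) ▸ hz
    · intro h; exact ⟨y, h, rfl⟩
  have hxB : (x : V) ∈ B := (memB x).2 (μ.refl' x)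
  have hrelB : ∀ a b : ↥A, (a : V) ∈ B → μ.r a b → (b : V) ∈ B := fun a b haB hab =>
    (memB b).2 (μ.trans' ((memB a).1 haB) hab)
  have hBneA : B ≠ A := by
    intro hEq
    apply hμ.2.1
    rw [Setoid.eq_top_iff]
    intro a b
    have ha : μ.r x a := (memB a).1 (by rw [hEq]; exact a.2)
    have hb : μ.r x b := (memB b).1 (by rw [hEq]; exact b.2)
    exact μ.trans' (μ.symm' ha) hb
  refine ⟨hBI, ?_⟩
  intro C hC hmeet
  by_contra hcon
  push_neg at hcon
  obtain ⟨hnBC, hnCB⟩ := hcon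
  obtain ⟨a₀, ha₀B, ha₀C⟩ := hmeet
  have ha₀A : a₀ ∈ A := hBA ha₀B
  obtain ⟨b₀, hb₀B, hb₀C⟩ := Set.not_subset.1 hnBC
  have hb₀A : b₀ ∈ A := hBA hb₀B
  by_cases hCA : C ⊆ A
  · -- Case 1 : C ⊆ A
    set D := B ∪ C with hD
    have hDI : D ∈ I := hI1 B hBI C hC ⟨a₀, ha₀B, ha₀C⟩
    have hDA : D ⊆ A := Set.union_subset hBA hCA
    have ha₀D : a₀ ∈ D := Set.mem_union_left _ ha₀B
    by_cases hDeq : D = A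
    · -- two-block partition {C, B \ C}
      have hBCI : B \ C ∈ I := (hI2 B hBI C hC ⟨a₀, ha₀B, ha₀C⟩ hnBC hnCB).1
      have h1 : A \ C = B \ C := by
        rw [← hDeq]
        ext v; simp only [hD, Set.mem_diff, Set.mem_union]
        tauto
      set ν := twoBlock A C with hν
      have hνdec : IsRestDecomp I A ν := by
        intro z
        by_cases hz : (z : V) ∈ C
        · exact ⟨C, hC, twoBlock_image A C z hz⟩
        · refine ⟨B \ C, hBCI, ?_⟩
          rw [twoBlock_image' A C z hz, h1]
          exact (Set.inter_eq_left.2 (Set.diff_subset.trans hBA)).symm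
      have hνtop : ν ≠ ⊤ := by
        intro htop
        have hrel : ν.r ⟨a₀, ha₀A⟩ ⟨b₀, hb₀A⟩ := by rw [htop]; trivial
        exact hb₀C (hrel.1 ha₀C)
      have hle := hμ.2.2 ν hνdec hνtop
      refine hnCB fun v hv => ?_
      have hvA : v ∈ A := hCA hv
      have hrel : ν.r ⟨a₀, ha₀A⟩ ⟨v, hvA⟩ := iff_of_true ha₀C hv
      exact hrelB ⟨a₀, ha₀A⟩ ⟨v, hvA⟩ ha₀B (Setoid.le_def.1 hle hrel)
    · -- merge partition with block D = B ∪ C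
      set ν := mergeBlock A D with hν
      have hνdec : IsRestDecomp I A ν := by
        intro z
        by_cases hz : (z : V) ∈ D
        · refine ⟨D, hDI, ?_⟩
          rw [mergeBlock_image A D z hz hDA]
          exact (Set.inter_eq_left.2 hDA).symm
        · refine ⟨{(z : V)}, hsingle _, ?_⟩
          rw [mergeBlock_image' A D z hz]
          exact (Set.inter_eq_left.2 (Set.singleton_subset_iff.2 z.2)).symm
      have hνtop : ν ≠ ⊤ := by
        obtain ⟨w, hwA, hwD⟩ : ∃ w, w ∈ A ∧ w ∉ D := by
          by_contra h
          push_neg at h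
          exact hDeq (Set.Subset.antisymm hDA h)
        intro htop
        have hrel : ν.r ⟨a₀, ha₀A⟩ ⟨w, hwA⟩ := by rw [htop]; trivial
        rcases hrel with heq | ⟨-, h2⟩
        · have haw : a₀ = w := congrArg Subtype.val heq
          exact hwD (haw ▸ ha₀D)
        · exact hwD h2
      have hle := hμ.2.2 ν hνdec hνtop
      refine hnCB fun v hv => ?_
      have hvA : v ∈ A := hCA hv
      have hrel : ν.r ⟨a₀, ha₀A⟩ ⟨v, hvA⟩ := Or.inr ⟨ha₀D, Set.mem_union_right _ hv⟩
      exact hrelB ⟨a₀, ha₀A⟩ ⟨v, hvA⟩ ha₀B (Setoid.le_def.1 hle hrel)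
  · -- Case 2 : C ⊄ A
    by_cases hAC : A ⊆ C
    · exact hnBC (hBA.trans hAC)
    · have hACn : (A ∩ C).Nonempty := ⟨a₀, ha₀A, ha₀C⟩
      have hADI : A \ C ∈ I := (hI2 A hA C hC hACn hAC hCA).1
      set ν := twoBlock A C with hν
      have hνdec : IsRestDecomp I A ν := by
        intro z
        by_cases hz : (z : V) ∈ C
        · exact ⟨C, hC, twoBlock_image A C z hz⟩
        · refine ⟨A \ C, hADI, ?_⟩
          rw [twoBlock_image' A C z hz]
          exact (Set.inter_eq_left.2 Set.diff_subset).symm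
      have hνtop : ν ≠ ⊤ := by
        obtain ⟨w, hwA, hwC⟩ := Set.not_subset.1 hAC
        intro htop
        have hrel : ν.r ⟨a₀, ha₀A⟩ ⟨w, hwA⟩ := by rw [htop]; trivial
        exact hwC (hrel.1 ha₀C)
      have hle := hμ.2.2 ν hνdec hνtop
      have hsub : A ⊆ B := by
        intro v hvA
        by_cases hvC : v ∈ C
        · have hrel : ν.r ⟨a₀, ha₀A⟩ ⟨v, hvA⟩ := iff_of_true ha₀C hvC
          exact hrelB ⟨a₀, ha₀A⟩ ⟨v, hvA⟩ ha₀B (Setoid.le_def.1 hle hrel)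
        · have hrel : ν.r ⟨b₀, hb₀A⟩ ⟨v, hvA⟩ := iff_of_false hb₀C hvC
          exact hrelB ⟨b₀, hb₀A⟩ ⟨v, hvA⟩ hb₀B (Setoid.le_def.1 hle hrel)
      exact hBneA (Set.Subset.antisymm hBA hsub)
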